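/- For a single hidden layer network h(x) = W¹Φ(W⁰x) with Φ entrywise slope-restricted in [α, β] (0 ≤ α ≤ β): if there exist ρ > 0 and a diagonal positive semidefinite matrix T such that the block matrix M = [[−2αβ(W⁰)ᵀTW⁰ − ρI, (α+β)(W⁰)ᵀT], [(α+β)TW⁰, −2T + (W¹)ᵀW¹]] is negative semidefinite, then ‖h(x) − h(y)‖₂ ≤ √ρ·‖x − y‖₂ for all x, y. -/

import Mathlib

open Matrix

/-- View a plain vector as an element of Euclidean space. -/
def eu {n : ℕ} (v : Fin n → ℝ) : EuclideanSpace ℝ (Fin n) := WithLp.toLp 2 v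

/-- View an element of Euclidean space as a plain vector. -/
def pl {n : ℕ} (v : EuclideanSpace ℝ (Fin n)) : Fin n → ℝ := v

lemma eu_norm_sq {n : ℕ} (v : Fin n → ℝ) : ‖eu v‖ ^ 2 = v ⬝ᵥ v := by
  rw [EuclideanSpace.norm_eq, Real.sq_sqrt (by positivity)]
  simp [eu, dotProduct, sq]

/-- LipSDP (Theorem 1): if the block LMI is negative semidefinite for some `ρ > 0`
and diagonal PSD `T`, then `h(x) = W¹Φ(W⁰x)` is `√ρ`-Lipschitz in ℓ₂ norm. -/
theorem lipsdp_one_layer {n m p : ℕ} (φ : ℝ → ℝ) (α β ρ : ℝ)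
    (hα : 0 ≤ α) (hαβ : α ≤ β) (hρ : 0 < ρ)
    (hslope : ∀ a b : ℝ, a ≠ b → α ≤ (φ a - φ b) / (a - b) ∧ (φ a - φ b) / (a - b) ≤ β)
    (W0 : Matrix (Fin m) (Fin n) ℝ) (W1 : Matrix (Fin p) (Fin m) ℝ)
    (T : Matrix (Fin m) (Fin m) ℝ) (hTdiag : T.IsDiag) (hTpsd : T.PosSemidef)
    (hM : (-(Matrix.fromBlocks
        ((-2 * α * β) • (W0ᵀ * T * W0) - ρ • (1 : Matrix (Fin n) (Fin n) ℝ))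
        ((α + β) • (W0ᵀ * T))
        ((α + β) • (T * W0))
        ((-2 : ℝ) • T + W1ᵀ * W1))).PosSemidef) :
    ∀ x y : EuclideanSpace ℝ (Fin n),
      ‖eu (W1.mulVec (fun i => φ (W0.mulVec (pl x) i)) -
           W1.mulVec (fun i => φ (W0.mulVec (pl y) i)))‖ ≤
        Real.sqrt ρ * ‖x - y‖ := by
  intro x y
  set d : Fin n → ℝ := pl x - pl y with hd
  set c : Fin m → ℝ := W0 *ᵥ d with hc
  set pv : Fin m → ℝ :=
    fun i => φ (W0.mulVec (pl x) i) - φ (W0.mulVec (pl y) i) with hpv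
  have hu : ∀ i, W0.mulVec (pl x) i - W0.mulVec (pl y) i = c i := by
    intro i
    rw [hc, hd, Matrix.mulVec_sub]
    rfl
  -- diagonal action of T
  have hT : ∀ w : Fin m → ℝ, T *ᵥ w = fun i => T i i * w i := by
    intro w; funext i
    simp only [Matrix.mulVec, dotProduct]
    rw [Finset.sum_eq_single i]
    · intro b _ hb; rw [hTdiag (Ne.symm hb)]; ring
    · intro h; exact absurd (Finset.mem_univ i) h
  have hTnn : ∀ i, 0 ≤ T i i := by
    intro i
    have h := hTpsd.dotProduct_mulVec_nonneg (Pi.single i 1)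
    have hs : star (Pi.single i 1 : Fin m → ℝ) = Pi.single i 1 := by
      funext j; simp
    rw [hs, hT] at h
    simpa [dotProduct, Pi.single_apply] using h
  -- pointwise slope inequality
  have hkey : ∀ i, T i i * ((pv i - α * c i) * (pv i - β * c i)) ≤ 0 := by
    intro i
    set a := W0.mulVec (pl x) i with ha
    set b := W0.mulVec (pl y) i with hb
    have hciab : c i = a - b := (hu i).symm
    by_cases hab : a = b
    · have hc0 : c i = 0 := by rw [hciab, hab, sub_self]
      have hp0 : pv i = 0 := by simp [hpv, ← ha, ← hb, hab]
      simp [hc0, hp0]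
    · obtain ⟨h1, h2⟩ := hslope a b hab
      have hab' : a - b ≠ 0 := sub_ne_zero.mpr hab
      have hp : pv i = ((φ a - φ b) / (a - b)) * (a - b) := by
        field_simp [hpv, ← ha, ← hb]
        rfl
      have hq : (pv i - α * c i) * (pv i - β * c i) ≤ 0 := by
        rw [hp, hciab]
        set s := (φ a - φ b) / (a - b) with hs
        nlinarith [mul_nonneg (mul_nonneg (sub_nonneg.2 h1) (sub_nonneg.2 h2))
          (sq_nonneg (a - b))]
      exact mul_nonpos_of_nonneg_of_nonpos (hTnn i) hq
  -- summed slope inequality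
  have hsum : pv ⬝ᵥ (T *ᵥ pv) - (α + β) * (c ⬝ᵥ (T *ᵥ pv))
      + α * β * (c ⬝ᵥ (T *ᵥ c)) ≤ 0 := by
    have h : ∑ i, T i i * ((pv i - α * c i) * (pv i - β * c i)) ≤ 0 :=
      Finset.sum_nonpos fun i _ => hkey i
    calc pv ⬝ᵥ (T *ᵥ pv) - (α + β) * (c ⬝ᵥ (T *ᵥ pv)) + α * β * (c ⬝ᵥ (T *ᵥ c))
        = ∑ i, T i i * ((pv i - α * c i) * (pv i - β * c i)) := by
          simp only [hT, dotProduct, Finset.mul_sum, ← Finset.sum_sub_distrib,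
            ← Finset.sum_add_distrib]
          exact Finset.sum_congr rfl fun i _ => by ring
      _ ≤ 0 := h
  -- dot product identities
  have key1 : d ⬝ᵥ (W0ᵀ * T * W0) *ᵥ d = c ⬝ᵥ (T *ᵥ c) := by
    rw [Matrix.mul_assoc, ← Matrix.mulVec_mulVec, Matrix.dotProduct_mulVec,
      Matrix.vecMul_transpose, ← Matrix.mulVec_mulVec, ← hc]
  have key2 : d ⬝ᵥ (W0ᵀ * T) *ᵥ pv = c ⬝ᵥ (T *ᵥ pv) := by
    rw [← Matrix.mulVec_mulVec, Matrix.dotProduct_mulVec, Matrix.vecMul_transpose, ← hc]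
  have key3 : pv ⬝ᵥ (T * W0) *ᵥ d = c ⬝ᵥ (T *ᵥ pv) := by
    rw [← Matrix.mulVec_mulVec, ← hc, hT, hT]
    simp only [dotProduct]
    exact Finset.sum_congr rfl fun i _ => by ring
  have key4 : pv ⬝ᵥ (W1ᵀ * W1) *ᵥ pv = (W1 *ᵥ pv) ⬝ᵥ (W1 *ᵥ pv) := by
    rw [← Matrix.mulVec_mulVec, Matrix.dotProduct_mulVec, Matrix.vecMul_transpose]
  -- LMI applied to stacked vector
  have hz := hM.dotProduct_mulVec_nonneg (Sum.elim d pv)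
  have hstar : star (Sum.elim d pv) = Sum.elim d pv := by
    funext i; cases i <;> simp
  rw [hstar, Matrix.fromBlocks_neg, Matrix.fromBlocks_mulVec] at hz
  rw [sumElim_dotProduct_sumElim] at hz
  have hcl : Sum.elim d pv ∘ Sum.inl = d := by funext i; rfl
  have hcr : Sum.elim d pv ∘ Sum.inr = pv := by funext i; rfl
  rw [hcl, hcr] at hz
  simp only [Matrix.neg_mulVec, Matrix.sub_mulVec, Matrix.add_mulVec,
    Matrix.smul_mulVec, Matrix.one_mulVec, dotProduct_add, dotProduct_neg,
    dotProduct_sub, dotProduct_smul, smul_eq_mul] at hz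
  rw [key1, key2, key3, key4] at hz
  -- main quadratic bound
  have hfinal : (W1 *ᵥ pv) ⬝ᵥ (W1 *ᵥ pv) ≤ ρ * (d ⬝ᵥ d) := by nlinarith [hz, hsum]
  -- conclude
  have hvec : (W1.mulVec (fun i => φ (W0.mulVec (pl x) i)) -
      W1.mulVec (fun i => φ (W0.mulVec (pl y) i))) = W1 *ᵥ pv := by
    rw [← Matrix.mulVec_sub]
    rfl
  rw [hvec]
  have hxy : x - y = eu d := rfl
  have h1 : ‖eu (W1 *ᵥ pv)‖ ^ 2 ≤ (Real.sqrt ρ * ‖x - y‖) ^ 2 := by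
    rw [mul_pow, Real.sq_sqrt hρ.le, eu_norm_sq, hxy, eu_norm_sq]
    exact hfinal
  have h2 := Real.sqrt_le_sqrt h1
  rwa [Real.sqrt_sq (norm_nonneg _), Real.sqrt_sq (by positivity)] at h2
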